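/- Let α be a real number with 0 ≤ α < 2/3, and let s and n be integers with s ≥ 2, s ≡ 2 (mod 3), n ≥ 25 and n ≥ (5s+8)/3. Then λ_α(K_s ∨ (K_{n−⌊5s/3⌋−1} ∪ (⌊2s/3⌋+1)K_1)) ≤ λ_α(K_2 ∨ (K_{n−4} ∪ 2K_1)), where ⌊5s/3⌋ = (5s−1)/3 and ⌊2s/3⌋ = (2s−1)/3. -/

import Mathlib

open SimpleGraph

/-- The `Aα`-matrix of a finite simple graph: `Aα(G) = α·D(G) + (1-α)·A(G)`. -/
noncomputable def aAlphaMatrix {V : Type*} [Finite V] (α : ℝ) (G : SimpleGraph V) :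
    Matrix V V ℝ :=
  letI := Fintype.ofFinite V
  letI := Classical.decEq V
  letI : DecidableRel G.Adj := Classical.decRel _
  α • Matrix.diagonal (fun v => (G.degree v : ℝ)) + (1 - α) • (G.adjMatrix ℝ)

/-- The `Aα`-spectral radius: the largest eigenvalue of `Aα(G)` (the supremum of its real
spectrum; all eigenvalues of this symmetric matrix are real). -/
noncomputable def lambdaAlpha {V : Type*} [Finite V] (α : ℝ) (G : SimpleGraph V) : ℝ :=
  letI := Fintype.ofFinite V
  letI := Classical.decEq V
  sSup (spectrum ℝ (aAlphaMatrix α G))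

/-- The join `G ∨ H` of two graphs on disjoint vertex sets. -/
def graphJoin {V W : Type*} (G : SimpleGraph V) (H : SimpleGraph W) : SimpleGraph (V ⊕ W) where
  Adj x y :=
    match x, y with
    | Sum.inl a, Sum.inl b => G.Adj a b
    | Sum.inr a, Sum.inr b => H.Adj a b
    | Sum.inl _, Sum.inr _ => True
    | Sum.inr _, Sum.inl _ => True
  symm := ⟨by
    rintro (a | a) (b | b) h
    · exact G.adj_symm h
    · trivial
    · trivial
    · exact H.adj_symm h⟩
  loopless := ⟨by
    rintro (a | a) h
    · exact G.ne_of_adj h rfl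
    · exact H.ne_of_adj h rfl⟩

/-- `G` has an `H`-factor where `H` consists of the paths `P_k` for `k ∈ ks`: a spanning
subgraph all of whose connected components are paths `P_k` with `k ∈ ks`. -/
def HasPathFactor {V : Type*} (G : SimpleGraph V) (ks : Set ℕ) : Prop :=
  ∃ F : SimpleGraph V, F ≤ G ∧
    ∀ c : F.ConnectedComponent, ∃ k ∈ ks, Nonempty ((F.induce c.supp) ≃g pathGraph k)

/-- `K_1 ∨ (K_{n-2} ∪ K_1)`. -/
def specialGraph (n : ℕ) : SimpleGraph (Fin 1 ⊕ (Fin (n - 2) ⊕ Fin 1)) :=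
  graphJoin (⊤ : SimpleGraph (Fin 1))
    ((⊤ : SimpleGraph (Fin (n - 2))) ⊕g (⊤ : SimpleGraph (Fin 1)))

/-- The graph `K_s ∨ (K_{n−⌊5s/3⌋−1} ∪ (⌊2s/3⌋+1)K_1)`. -/
def bigGraph (n s : ℕ) :
    SimpleGraph (Fin s ⊕ (Fin (n - 5 * s / 3 - 1) ⊕ Fin (2 * s / 3 + 1))) :=
  graphJoin (⊤ : SimpleGraph (Fin s))
    ((⊤ : SimpleGraph (Fin (n - 5 * s / 3 - 1))) ⊕g (⊥ : SimpleGraph (Fin (2 * s / 3 + 1))))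


section SpectralAux
open Matrix
variable {n : Type*} [Fintype n] [DecidableEq n]


variable {n : Type*} [Fintype n] [DecidableEq n]

/-- Collatz–Wielandt style upper bound for the real spectrum of a nonnegative matrix. -/
lemma sSup_spectrum_le_of_mulVec_le {A : Matrix n n ℝ} (hpos : ∀ i j, 0 ≤ A i j)
    {x : n → ℝ} (hx : ∀ i, 0 < x i) {c : ℝ} (hc : 0 ≤ c)
    (hAx : ∀ i, (A *ᵥ x) i ≤ c * x i) : sSup (spectrum ℝ A) ≤ c := by
  apply Real.sSup_le _ hc
  intro μ hμ
  have hμ' : Module.End.HasEigenvalue (Matrix.toLinAlgEquiv' A) μ := by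
    rw [Module.End.hasEigenvalue_iff_mem_spectrum, AlgEquiv.spectrum_eq]
    exact hμ
  obtain ⟨v, hv⟩ := hμ'.exists_hasEigenvector
  have hveq : A *ᵥ v = μ • v := by
    have := hv.apply_eq_smul
    rwa [Matrix.toLinAlgEquiv'_apply] at this
  have hvne : v ≠ 0 := hv.right
  obtain ⟨j₀, hj₀⟩ := Function.ne_iff.mp hvne
  obtain ⟨i, -, hi⟩ := Finset.exists_max_image Finset.univ (fun j => |v j| / x j)
    ⟨j₀, Finset.mem_univ j₀⟩
  have hvi : 0 < |v i| := by
    have h1 : 0 < |v j₀| / x j₀ := div_pos (abs_pos.mpr hj₀) (hx j₀)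
    have h2 := hi j₀ (Finset.mem_univ j₀)
    have := lt_of_lt_of_le h1 h2
    have := mul_pos this (hx i)
    calc (0:ℝ) < |v i| / x i * x i := mul_pos (lt_of_lt_of_le h1 h2) (hx i)
    _ = |v i| := div_mul_cancel₀ _ (ne_of_gt (hx i))
  have key : |μ| * |v i| ≤ c * |v i| := by
    have h1 : |μ * v i| = |(A *ᵥ v) i| := by rw [hveq]; simp [mul_comm]
    have h2 : |(A *ᵥ v) i| ≤ ∑ j, A i j * |v j| := by
      refine le_trans (Finset.abs_sum_le_sum_abs _ _) ?_
      apply Finset.sum_le_sum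
      intro j _
      rw [abs_mul, abs_of_nonneg (hpos i j)]
    have h3 : ∀ j, A i j * |v j| ≤ A i j * (|v i| / x i * x j) := by
      intro j
      apply mul_le_mul_of_nonneg_left _ (hpos i j)
      have := hi j (Finset.mem_univ j)
      calc |v j| = |v j| / x j * x j := (div_mul_cancel₀ _ (ne_of_gt (hx j))).symm
      _ ≤ |v i| / x i * x j := mul_le_mul_of_nonneg_right this (le_of_lt (hx j))
    have h4 : ∑ j, A i j * (|v i| / x i * x j) = |v i| / x i * (A *ᵥ x) i := by
      simp only [Matrix.mulVec, dotProduct, Finset.mul_sum]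
      apply Finset.sum_congr rfl
      intro j _
      ring
    have h5 : |v i| / x i * (A *ᵥ x) i ≤ |v i| / x i * (c * x i) := by
      exact mul_le_mul_of_nonneg_left (hAx i)
        (div_nonneg (abs_nonneg _) (le_of_lt (hx i)))
    have h6 : |v i| / x i * (c * x i) = c * |v i| := by
      rw [mul_comm c (x i), ← mul_assoc, div_mul_cancel₀ _ (ne_of_gt (hx i))]
      ring
    calc |μ| * |v i| = |μ * v i| := (abs_mul _ _).symm
    _ = |(A *ᵥ v) i| := h1
    _ ≤ ∑ j, A i j * |v j| := h2
    _ ≤ ∑ j, A i j * (|v i| / x i * x j) := Finset.sum_le_sum fun j _ => h3 j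
    _ = |v i| / x i * (A *ᵥ x) i := h4
    _ ≤ |v i| / x i * (c * x i) := h5
    _ = c * |v i| := h6
  have : |μ| ≤ c := le_of_mul_le_mul_right (by simpa [mul_comm] using key) hvi
  exact le_trans (le_abs_self μ) this


lemma quadForm_le_max_eigenvalue {A : Matrix n n ℝ} (hA : A.IsHermitian) {l : ℝ}
    (hl : ∀ i, hA.eigenvalues i ≤ l) (y : n → ℝ) :
    y ⬝ᵥ (A *ᵥ y) ≤ l * (y ⬝ᵥ y) := by
  classical
  set U : Matrix n n ℝ := (hA.eigenvectorUnitary : Matrix n n ℝ) with hU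
  have hUU : U * star U = 1 := (Matrix.mem_unitaryGroup_iff).mp hA.eigenvectorUnitary.2
  set z : n → ℝ := (star U) *ᵥ y with hz
  have hdiag : (Matrix.diagonal (RCLike.ofReal ∘ hA.eigenvalues) : Matrix n n ℝ)
      = Matrix.diagonal hA.eigenvalues := by
    congr 1
  have hAy : A *ᵥ y = U *ᵥ (Matrix.diagonal hA.eigenvalues *ᵥ z) := by
    conv_lhs => rw [hA.spectral_theorem]
    rw [Unitary.conjStarAlgAut_apply, hdiag, ← Matrix.mulVec_mulVec, ← Matrix.mulVec_mulVec]
  have hstarU : star U = Uᵀ := by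
    rw [Matrix.star_eq_conjTranspose, Matrix.conjTranspose_eq_transpose_of_trivial]
  have hyU : ∀ w : n → ℝ, y ⬝ᵥ (U *ᵥ w) = z ⬝ᵥ w := by
    intro w
    rw [dotProduct_mulVec, hz, hstarU, Matrix.mulVec_transpose]
  have hyy : y ⬝ᵥ y = z ⬝ᵥ z := by
    have h1 : U *ᵥ z = y := by
      rw [hz, Matrix.mulVec_mulVec, hUU, Matrix.one_mulVec]
    have h2 : y ⬝ᵥ y = y ⬝ᵥ (U *ᵥ z) := by rw [h1]
    rw [h2, hyU]
  have hform : y ⬝ᵥ (A *ᵥ y) = ∑ i, hA.eigenvalues i * (z i)^2 := by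
    rw [hAy, hyU, dotProduct]
    apply Finset.sum_congr rfl
    intro i _
    rw [Matrix.mulVec_diagonal]
    ring
  rw [hform, hyy, dotProduct, Finset.mul_sum]
  apply Finset.sum_le_sum
  intro i _
  have h2 : (0:ℝ) ≤ z i ^ 2 := sq_nonneg _
  have := mul_le_mul_of_nonneg_right (hl i) h2
  calc hA.eigenvalues i * z i ^ 2 ≤ l * z i ^ 2 := this
  _ = l * (z i * z i) := by ring

lemma le_sSup_spectrum_of_quadForm [Nonempty n] {A : Matrix n n ℝ} (hA : A.IsHermitian)
    {y : n → ℝ} {c : ℝ} (hy : 0 < y ⬝ᵥ y) (h : c * (y ⬝ᵥ y) ≤ y ⬝ᵥ (A *ᵥ y)) :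
    c ≤ sSup (spectrum ℝ A) := by
  classical
  obtain ⟨i₀, -, hi₀⟩ := Finset.exists_max_image Finset.univ hA.eigenvalues
    Finset.univ_nonempty
  set l := hA.eigenvalues i₀ with hldef
  have hquad := quadForm_le_max_eigenvalue hA (fun i => hi₀ i (Finset.mem_univ i))
  have hcl : c ≤ l := by
    have := le_trans h (hquad y)
    exact le_of_mul_le_mul_right (by simpa [mul_comm] using this) hy
  have hmem : l ∈ spectrum ℝ A := hA.eigenvalues_mem_spectrum_real i₀
  have hbdd : BddAbove (spectrum ℝ A) := by
    refine ⟨l, ?_⟩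
    intro μ hμ
    have hμ' : Module.End.HasEigenvalue (Matrix.toLinAlgEquiv' A) μ := by
      rw [Module.End.hasEigenvalue_iff_mem_spectrum, AlgEquiv.spectrum_eq]
      exact hμ
    obtain ⟨v, hv⟩ := hμ'.exists_hasEigenvector
    have hveq : A *ᵥ v = μ • v := by
      have := hv.apply_eq_smul
      rwa [Matrix.toLinAlgEquiv'_apply] at this
    have hvv : 0 < v ⬝ᵥ v := by
      obtain ⟨j, hj⟩ := Function.ne_iff.mp hv.right
      have : (0:ℝ) < v j * v j := mul_self_pos.mpr hj
      refine lt_of_lt_of_le this ?_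
      rw [dotProduct]
      exact Finset.single_le_sum (fun i _ => mul_self_nonneg (v i)) (Finset.mem_univ j)
    have hq := hquad v
    rw [hveq] at hq
    have : μ * (v ⬝ᵥ v) ≤ l * (v ⬝ᵥ v) := by
      simpa [dotProduct_smul, smul_eq_mul] using hq
    exact le_of_mul_le_mul_right (by simpa [mul_comm] using this) hvv
  exact le_trans hcl (le_csSup hbdd hmem)

end SpectralAux

section AAlphaAux
open SimpleGraph Matrix
variable {V : Type*} [Fintype V] [DecidableEq V]


lemma degree_toReal {G : SimpleGraph V} [DecidableRel G.Adj] (v : V) :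
    ((G.degree v : ℕ) : ℝ) = ∑ w, (if G.Adj v w then (1:ℝ) else 0) := by
  rw [Finset.sum_boole]
  norm_cast
  rw [SimpleGraph.degree]
  congr 1
  ext w
  simp [SimpleGraph.mem_neighborFinset]

lemma degree_toReal' {G : SimpleGraph V} [DecidableRel G.Adj] (v : V)
    (inst : Fintype (G.neighborSet v)) :
    ((@SimpleGraph.degree V G v inst : ℕ) : ℝ) = ∑ w, (if G.Adj v w then (1:ℝ) else 0) := by
  rw [Subsingleton.elim inst (G.neighborSetFintype v)]
  exact degree_toReal v

lemma aAlphaMatrix_apply (α : ℝ) (G : SimpleGraph V) [DecidableRel G.Adj] (v u : V) :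
    aAlphaMatrix α G v u =
      (if v = u then α * ∑ w, (if G.Adj v w then (1:ℝ) else 0) else 0)
      + (1 - α) * (if G.Adj v u then 1 else 0) := by
  rw [aAlphaMatrix]
  simp only [Matrix.add_apply, Matrix.smul_apply, Matrix.diagonal_apply, smul_eq_mul,
    SimpleGraph.adjMatrix_apply]
  by_cases h : v = u
  · rw [if_pos h, if_pos h]
    by_cases h2 : G.Adj v u
    · rw [if_pos h2, if_pos h2]
      rw [degree_toReal']
    · rw [if_neg h2, if_neg h2]
      rw [degree_toReal']
  · rw [if_neg h, if_neg h]
    by_cases h2 : G.Adj v u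
    · rw [if_pos h2, if_pos h2]; ring
    · rw [if_neg h2, if_neg h2]; ring

lemma aAlphaMatrix_row (α : ℝ) (G : SimpleGraph V) [DecidableRel G.Adj] (x : V → ℝ) (v : V) :
    (aAlphaMatrix α G *ᵥ x) v =
      α * (∑ w, (if G.Adj v w then (1:ℝ) else 0)) * x v
      + (1 - α) * ∑ u, (if G.Adj v u then (1:ℝ) else 0) * x u := by
  rw [Matrix.mulVec, dotProduct]
  simp only [aAlphaMatrix_apply, add_mul, Finset.sum_add_distrib]
  congr 1
  · have : (∑ u, (if v = u then α * (∑ w, (if G.Adj v w then (1:ℝ) else 0)) else 0) * x u)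
        = ∑ u, (if v = u then α * (∑ w, (if G.Adj v w then (1:ℝ) else 0)) * x u else 0) := by
      apply Finset.sum_congr rfl
      intro u _
      by_cases h : v = u
      · rw [if_pos h, if_pos h]
      · rw [if_neg h, if_neg h, zero_mul]
    rw [this, Finset.sum_ite_eq Finset.univ v
      (fun u => α * (∑ w, (if G.Adj v w then (1:ℝ) else 0)) * x u),
      if_pos (Finset.mem_univ v)]
  · rw [Finset.mul_sum]
    apply Finset.sum_congr rfl
    intro u _
    ring

lemma aAlphaMatrix_nonneg {α : ℝ} (hα0 : 0 ≤ α) (hα1 : α ≤ 1) (G : SimpleGraph V)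
    [DecidableRel G.Adj] (v u : V) : 0 ≤ aAlphaMatrix α G v u := by
  rw [aAlphaMatrix_apply]
  have h1 : (0:ℝ) ≤ ∑ w, (if G.Adj v w then (1:ℝ) else 0) :=
    Finset.sum_nonneg fun w _ => by positivity
  have : (0:ℝ) ≤ 1 - α := by linarith
  positivity

lemma aAlphaMatrix_isHermitian (α : ℝ) (G : SimpleGraph V) [DecidableRel G.Adj] :
    (aAlphaMatrix α G).IsHermitian := by
  rw [Matrix.IsHermitian]
  ext v u
  rw [Matrix.conjTranspose_apply]
  rw [aAlphaMatrix_apply, aAlphaMatrix_apply]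
  simp only [star_trivial]
  by_cases h : v = u
  · subst h; rfl
  · rw [if_neg h, if_neg (Ne.symm h)]
    by_cases h2 : G.Adj v u
    · rw [if_pos h2, if_pos (G.adj_symm h2)]
    · rw [if_neg h2, if_neg (fun hh => h2 (G.adj_symm hh))]

end AAlphaAux

open SimpleGraph Matrix

lemma lambdaAlpha_eq {V : Type*} [Fintype V] [DecidableEq V] (α : ℝ) (G : SimpleGraph V) :
    lambdaAlpha α G = sSup (spectrum ℝ (aAlphaMatrix α G)) := by
  have h1 : Fintype.ofFinite V = ‹Fintype V› := Subsingleton.elim _ _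
  have h2 : Classical.decEq V = ‹DecidableEq V› := by
    funext a b
    exact Subsingleton.elim _ _
  rw [lambdaAlpha, h1, h2]

section BigGraphRows

/-- piecewise-constant weight vector -/
def xvec {p q r : ℕ} (a b e : ℝ) : (Fin p ⊕ (Fin q ⊕ Fin r)) → ℝ :=
  Sum.elim (fun _ => a) (Sum.elim (fun _ => b) (fun _ => e))

lemma sum_ind_ne {p : ℕ} (a : Fin p) (C : ℝ) :
    ∑ b, (if a ≠ b then (1:ℝ) else 0) * C = ((p:ℝ) - 1) * C := by
  have h : ∀ b : Fin p, (if a ≠ b then (1:ℝ) else 0) * C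
      = 1 * C - (if a = b then 1 * C else 0) := by
    intro b
    by_cases hb : a = b <;> simp [hb]
  rw [Finset.sum_congr rfl (fun b _ => h b), Finset.sum_sub_distrib,
    Finset.sum_ite_eq Finset.univ a (fun _ => 1 * C), if_pos (Finset.mem_univ a),
    Finset.sum_const, Finset.card_univ, Fintype.card_fin]
  push_cast
  ring

lemma sum_ind_true {p : ℕ} (C : ℝ) :
    ∑ _b : Fin p, (if True then (1:ℝ) else 0) * C = (p:ℝ) * C := by
  simp [Finset.sum_const, Finset.card_univ, mul_comm]

variable {α : ℝ} {n s : ℕ}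

lemma bigGraph_adj_inl_inl (a b : Fin s) :
    (bigGraph n s).Adj (Sum.inl a) (Sum.inl b) ↔ a ≠ b := by
  simp [bigGraph, graphJoin]

lemma bigGraph_adj_inl_inr (a : Fin s) (u : Fin (n - 5*s/3 - 1) ⊕ Fin (2*s/3+1)) :
    (bigGraph n s).Adj (Sum.inl a) (Sum.inr u) ↔ True := by
  simp [bigGraph, graphJoin]

lemma bigGraph_adj_inr_inl (a : Fin s) (u : Fin (n - 5*s/3 - 1) ⊕ Fin (2*s/3+1)) :
    (bigGraph n s).Adj (Sum.inr u) (Sum.inl a) ↔ True := by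
  simp [bigGraph, graphJoin]

lemma bigGraph_adj_c_c (a b : Fin (n - 5*s/3 - 1)) :
    (bigGraph n s).Adj (Sum.inr (Sum.inl a)) (Sum.inr (Sum.inl b)) ↔ a ≠ b := by
  simp [bigGraph, graphJoin]

lemma bigGraph_adj_c_i (a : Fin (n - 5*s/3 - 1)) (b : Fin (2*s/3+1)) :
    (bigGraph n s).Adj (Sum.inr (Sum.inl a)) (Sum.inr (Sum.inr b)) ↔ False := by
  simp [bigGraph, graphJoin]

lemma bigGraph_adj_i_c (a : Fin (n - 5*s/3 - 1)) (b : Fin (2*s/3+1)) :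
    (bigGraph n s).Adj (Sum.inr (Sum.inr b)) (Sum.inr (Sum.inl a)) ↔ False := by
  simp [bigGraph, graphJoin]

lemma bigGraph_adj_i_i (a b : Fin (2*s/3+1)) :
    (bigGraph n s).Adj (Sum.inr (Sum.inr a)) (Sum.inr (Sum.inr b)) ↔ False := by
  simp [bigGraph, graphJoin]

end BigGraphRows

lemma sum_ind_ne₀ {p : ℕ} (a : Fin p) :
    ∑ b, (if a ≠ b then (1:ℝ) else 0) = (p:ℝ) - 1 := by
  have := sum_ind_ne a (1:ℝ)
  simpa using this

section Rows
variable (α : ℝ) (n s : ℕ) (a b e : ℝ)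

lemma bigGraph_row_S (v : Fin s) :
    letI : DecidableRel (bigGraph n s).Adj := Classical.decRel _
    (aAlphaMatrix α (bigGraph n s) *ᵥ xvec a b e) (Sum.inl v)
    = α * (((s:ℝ) - 1) + (n - 5*s/3 - 1 : ℕ) + (2*s/3+1 : ℕ)) * a
      + (1-α) * ((((s:ℝ)) - 1)*a + ((n - 5*s/3 - 1 : ℕ):ℝ)*b + ((2*s/3+1 : ℕ):ℝ)*e) := by
  letI : DecidableRel (bigGraph n s).Adj := Classical.decRel _
  rw [aAlphaMatrix_row]
  simp only [Fintype.sum_sum_type, xvec, Sum.elim_inl, Sum.elim_inr,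
    bigGraph_adj_inl_inl, bigGraph_adj_inl_inr, if_true]
  rw [sum_ind_ne, sum_ind_ne₀]
  simp only [Finset.sum_const, Finset.card_univ, Fintype.card_fin, nsmul_eq_mul, mul_one]
  ring

lemma bigGraph_row_C (v : Fin (n - 5*s/3 - 1)) :
    letI : DecidableRel (bigGraph n s).Adj := Classical.decRel _
    (aAlphaMatrix α (bigGraph n s) *ᵥ xvec a b e) (Sum.inr (Sum.inl v))
    = α * ((s:ℝ) + (((n - 5*s/3 - 1 : ℕ):ℝ) - 1)) * b
      + (1-α) * ((s:ℝ)*a + (((n - 5*s/3 - 1 : ℕ):ℝ) - 1)*b) := by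
  letI : DecidableRel (bigGraph n s).Adj := Classical.decRel _
  rw [aAlphaMatrix_row]
  simp only [Fintype.sum_sum_type, xvec, Sum.elim_inl, Sum.elim_inr,
    bigGraph_adj_inr_inl, bigGraph_adj_c_c, bigGraph_adj_c_i, if_true, if_false]
  rw [sum_ind_ne, sum_ind_ne₀]
  simp only [Finset.sum_const, Finset.card_univ, Fintype.card_fin, nsmul_eq_mul, mul_one,
    zero_mul, Finset.sum_const_zero, mul_zero, add_zero]
  ring

lemma bigGraph_row_I (v : Fin (2*s/3+1)) :
    letI : DecidableRel (bigGraph n s).Adj := Classical.decRel _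
    (aAlphaMatrix α (bigGraph n s) *ᵥ xvec a b e) (Sum.inr (Sum.inr v))
    = α * (s:ℝ) * e + (1-α) * ((s:ℝ)*a) := by
  letI : DecidableRel (bigGraph n s).Adj := Classical.decRel _
  rw [aAlphaMatrix_row]
  simp only [Fintype.sum_sum_type, xvec, Sum.elim_inl, Sum.elim_inr,
    bigGraph_adj_inr_inl, bigGraph_adj_i_c, bigGraph_adj_i_i, if_true, if_false]
  simp only [Finset.sum_const, Finset.card_univ, Fintype.card_fin, nsmul_eq_mul, mul_one,
    zero_mul, Finset.sum_const_zero, mul_zero, add_zero]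
  ring

end Rows

private lemma keyIneq (α K N : ℝ) (h1 : 0 ≤ α) (h2 : α ≤ 2/3) (h3 : 1 ≤ K) (h4 : 25 ≤ N)
    (h5 : 5*K+6 ≤ N) :
    24*(N-3-α*(3*K+2)) ≤
    (1-α)*(3*(N-(3*K+2))*(N-3-α*(3*K+2)) + (6*K+6)*(3*(N-3-α*(3*K+2)) - 4*(1-α)*(3*K+2))) := by
  nlinarith [mul_nonneg h1 (by linarith : (0:ℝ) ≤ K), sq_nonneg (N-5*K-6), sq_nonneg (N-25),
    mul_nonneg (sub_nonneg.mpr h5) (sub_nonneg.mpr h4), mul_nonneg (sub_nonneg.mpr h2) h1,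
    mul_nonneg (sub_nonneg.mpr h2) (sub_nonneg.mpr h3), mul_nonneg (sub_nonneg.mpr h5) h1,
    mul_nonneg (sub_nonneg.mpr h4) h1, mul_nonneg (sub_nonneg.mpr h5) (sub_nonneg.mpr h3),
    mul_nonneg (sub_nonneg.mpr h4) (sub_nonneg.mpr h3)]

private lemma rowSIneq (α K N e₀ : ℝ) (h1 : 0 ≤ α) (h2 : α ≤ 2/3) (h3 : 1 ≤ K) (h4 : 25 ≤ N)
    (h5 : 5*K+6 ≤ N) (hd0 : 0 < N - 3 - α*(3*K+2))
    (hee : e₀ * (N - 3 - α * (3 * K + 2)) = 4 / 3 * (1 - α) * (3 * K + 2)) :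
    α * ((3*K+2 - 1) + (N - 5*K - 4) + (2*K+2)) * (4/3)
      + (1-α)*((3*K+2 - 1)*(4/3) + (N - 5*K - 4)*1 + (2*K+2)*e₀) ≤ (N-3) * (4/3) := by
  have hP := keyIneq α K N h1 h2 h3 h4 h5
  have hdiff : ((N-3) * (4/3)
      - (α * ((3*K+2 - 1) + (N - 5*K - 4) + (2*K+2)) * (4/3)
        + (1-α)*((3*K+2 - 1)*(4/3) + (N - 5*K - 4)*1 + (2*K+2)*e₀)))
        * (9*(N-3-α*(3*K+2)))
      = (1-α)*(3*(N-(3*K+2))*(N-3-α*(3*K+2))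
        + (6*K+6)*(3*(N-3-α*(3*K+2)) - 4*(1-α)*(3*K+2)))
        - 24*(N-3-α*(3*K+2)) := by
    linear_combination (-9*(1-α)*(2*K+2)) * hee
  nlinarith [hP, hdiff, hd0]

private lemma rowCIneq (α K N : ℝ) (h1 : 0 ≤ α) (h2 : α ≤ 2/3) (h3 : 1 ≤ K) (h4 : 25 ≤ N)
    (h5 : 5*K+6 ≤ N) :
    α * ((3*K+2) + ((N - 5*K - 4) - 1)) * 1
      + (1-α)*((3*K+2)*(4/3) + ((N - 5*K - 4) - 1)*1) ≤ (N-3) * 1 := by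
  nlinarith [mul_nonneg h1 (by linarith : (0:ℝ) ≤ K)]

private lemma rowIIneq (α K N e₀ : ℝ)
    (hee : e₀ * (N - 3 - α * (3 * K + 2)) = 4 / 3 * (1 - α) * (3 * K + 2)) :
    α * (3*K+2) * e₀ + (1-α)*((3*K+2)*(4/3)) ≤ (N-3) * e₀ := by
  nlinarith [hee]

/-- For `0 ≤ α < 2/3` and integers `s ≥ 2` with `s ≡ 2 (mod 3)`, `n ≥ 25` and
`n ≥ (5s+8)/3` (i.e. `5s + 8 ≤ 3n`),
`λ_α(K_s ∨ (K_{n−⌊5s/3⌋−1} ∪ (⌊2s/3⌋+1)K_1)) ≤ λ_α(K_2 ∨ (K_{n−4} ∪ 2K_1))`. -/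
theorem lambdaAlpha_bigGraph_le_case2 (α : ℝ) (hα0 : 0 ≤ α) (hα1 : α < 2 / 3)
    (s n : ℕ) (hs : 2 ≤ s) (hs3 : s % 3 = 2) (hn : 25 ≤ n) (hns : 5 * s + 8 ≤ 3 * n) :
    lambdaAlpha α (bigGraph n s) ≤ lambdaAlpha α (bigGraph n 2) := by
  have hα1' : α ≤ 2/3 := le_of_lt hα1
  have h23 : α ≤ 1 := by linarith
  rcases eq_or_lt_of_le hs with h2 | h5
  · obtain rfl : s = 2 := h2.symm
    exact le_refl _
  · have hs5 : 5 ≤ s := by omega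
    have hsk : s = 3 * (s / 3) + 2 := by omega
    set k := s / 3 with hkdef
    have hk1 : 1 ≤ k := by omega
    have hnk : 5 * k + 6 ≤ n := by omega
    have hm : ((n - 5*s/3 - 1 : ℕ) : ℝ) = (n:ℝ) - 5*(k:ℝ) - 4 := by
      have h1 : n - 5*s/3 - 1 = n - (5*k+4) := by omega
      rw [h1, Nat.cast_sub (by omega)]
      push_cast; ring
    have ht : ((2*s/3 + 1 : ℕ) : ℝ) = 2*(k:ℝ) + 2 := by
      have h1 : 2*s/3 + 1 = 2*k+2 := by omega
      rw [h1]; push_cast; ring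
    have hsr : (s:ℝ) = 3*(k:ℝ) + 2 := by
      rw [hsk]; push_cast; ring
    have hk1r : (1:ℝ) ≤ (k:ℝ) := by exact_mod_cast hk1
    have hn25 : (25:ℝ) ≤ (n:ℝ) := by exact_mod_cast hn
    have hnkr : 5*(k:ℝ) + 6 ≤ (n:ℝ) := by exact_mod_cast hnk
    have hk0 : (0:ℝ) ≤ (k:ℝ) := by linarith
    have hd0 : 0 < (n:ℝ) - 3 - α*(s:ℝ) := by
      rw [hsr]; nlinarith [mul_nonneg hα0 hk0]
    set e₀ : ℝ := 4*(1-α)*(s:ℝ)/(3*((n:ℝ) - 3 - α*(s:ℝ))) with he₀def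
    have he₀pos : 0 < e₀ := by
      apply div_pos
      · rw [hsr]; nlinarith
      · linarith
    have hee : e₀ * ((n:ℝ) - 3 - α*(s:ℝ)) = 4/3*(1-α)*(s:ℝ) := by
      rw [he₀def]
      field_simp
    rw [hsr] at hee
    -- Upper bound: λ_α(bigGraph n s) ≤ n - 3
    have hup : lambdaAlpha α (bigGraph n s) ≤ (n:ℝ) - 3 := by
      haveI : DecidableRel (bigGraph n s).Adj := Classical.decRel _
      rw [lambdaAlpha_eq]
      apply sSup_spectrum_le_of_mulVec_le
        (fun i j => aAlphaMatrix_nonneg hα0 h23 (bigGraph n s) i j)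
        (x := xvec (4/3) 1 e₀) ?_ (by linarith) ?_
      · rintro (v | v | v)
        · norm_num [xvec]
        · norm_num [xvec]
        · simpa [xvec] using he₀pos
      · rintro (v | v | v)
        · -- S row
          rw [bigGraph_row_S, hm, ht, hsr]
          have hxv : xvec (p := s) (q := n - 5*s/3 - 1) (r := 2*s/3+1)
              (4/3 : ℝ) 1 e₀ (Sum.inl v) = 4/3 := rfl
          rw [hxv]
          exact rowSIneq α (k:ℝ) (n:ℝ) e₀ hα0 hα1' hk1r hn25 hnkr
            (by rw [hsr] at hd0; exact hd0) hee
        · -- C row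
          rw [bigGraph_row_C, hm, hsr]
          have hxv : xvec (p := s) (q := n - 5*s/3 - 1) (r := 2*s/3+1)
              (4/3 : ℝ) 1 e₀ (Sum.inr (Sum.inl v)) = 1 := rfl
          rw [hxv]
          exact rowCIneq α (k:ℝ) (n:ℝ) hα0 hα1' hk1r hn25 hnkr
        · -- I row
          rw [bigGraph_row_I, hsr]
          have hxv : xvec (p := s) (q := n - 5*s/3 - 1) (r := 2*s/3+1)
              (4/3 : ℝ) 1 e₀ (Sum.inr (Sum.inr v)) = e₀ := rfl
          rw [hxv]
          exact rowIIneq α (k:ℝ) (n:ℝ) e₀ hee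
    -- Lower bound: n - 3 ≤ λ_α(bigGraph n 2)
    have hlow : (n:ℝ) - 3 ≤ lambdaAlpha α (bigGraph n 2) := by
      haveI : DecidableRel (bigGraph n 2).Adj := Classical.decRel _
      rw [lambdaAlpha_eq]
      have hm2 : ((n - 5*2/3 - 1 : ℕ) : ℝ) = (n:ℝ) - 4 := by
        have h1 : n - 5*2/3 - 1 = n - 4 := by omega
        rw [h1, Nat.cast_sub (by omega)]; norm_num
      have ht2 : ((2*2/3 + 1 : ℕ) : ℝ) = 2 := by norm_num
      have hyy : (xvec (p := 2) (q := n - 5*2/3 - 1) (r := 2*2/3+1) (1:ℝ) 1 0) ⬝ᵥ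
          (xvec (1:ℝ) 1 0) = 2 + ((n - 5*2/3 - 1 : ℕ) : ℝ) := by
        rw [dotProduct, Fintype.sum_sum_type, Fintype.sum_sum_type]
        simp [xvec]
      have e1 : ∀ v : Fin 2, (xvec (p := 2) (q := n - 5*2/3 - 1) (r := 2*2/3+1) (1:ℝ) 1 0)
          (Sum.inl v) * (aAlphaMatrix α (bigGraph n 2) *ᵥ xvec (1:ℝ) 1 0) (Sum.inl v)
          = α*((n:ℝ)-1) + (1-α)*((n:ℝ)-3) := by
        intro v
        rw [show (xvec (p := 2) (q := n - 5*2/3 - 1) (r := 2*2/3+1) (1:ℝ) 1 0) (Sum.inl v)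
            = 1 from rfl, one_mul, bigGraph_row_S α n 2 1 1 0 v, hm2, ht2]
        norm_num
        ring
      have e2 : ∀ v : Fin (n - 5*2/3 - 1), (xvec (p := 2) (q := n - 5*2/3 - 1) (r := 2*2/3+1)
          (1:ℝ) 1 0) (Sum.inr (Sum.inl v))
          * (aAlphaMatrix α (bigGraph n 2) *ᵥ xvec (1:ℝ) 1 0) (Sum.inr (Sum.inl v))
          = (n:ℝ)-3 := by
        intro v
        rw [show (xvec (p := 2) (q := n - 5*2/3 - 1) (r := 2*2/3+1) (1:ℝ) 1 0)
            (Sum.inr (Sum.inl v)) = 1 from rfl, one_mul, bigGraph_row_C α n 2 1 1 0 v, hm2]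
        norm_num
        ring
      have e3 : ∀ v : Fin (2*2/3+1), (xvec (p := 2) (q := n - 5*2/3 - 1) (r := 2*2/3+1)
          (1:ℝ) 1 0) (Sum.inr (Sum.inr v))
          * (aAlphaMatrix α (bigGraph n 2) *ᵥ xvec (1:ℝ) 1 0) (Sum.inr (Sum.inr v)) = 0 := by
        intro v
        rw [show (xvec (p := 2) (q := n - 5*2/3 - 1) (r := 2*2/3+1) (1:ℝ) 1 0)
            (Sum.inr (Sum.inr v)) = 0 from rfl, zero_mul]
      have hMy : (xvec (p := 2) (q := n - 5*2/3 - 1) (r := 2*2/3+1) (1:ℝ) 1 0) ⬝ᵥ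
          (aAlphaMatrix α (bigGraph n 2) *ᵥ xvec (1:ℝ) 1 0)
          = 2 * (α*((n:ℝ)-1) + (1-α)*((n:ℝ)-3)) + ((n:ℝ)-4) * ((n:ℝ)-3) := by
        rw [dotProduct, Fintype.sum_sum_type, Fintype.sum_sum_type]
        simp only [e1, e2, e3, Finset.sum_const, Finset.card_univ, Fintype.card_fin,
          nsmul_eq_mul, Finset.sum_const_zero, add_zero, hm2]
        push_cast
        ring
      apply le_sSup_spectrum_of_quadForm (aAlphaMatrix_isHermitian α (bigGraph n 2))
        (y := xvec (1:ℝ) 1 0)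
      · rw [hyy, hm2]
        have hn25 : (25:ℝ) ≤ (n:ℝ) := by exact_mod_cast hn
        linarith
      · rw [hyy, hMy, hm2]
        have hn25 : (25:ℝ) ≤ (n:ℝ) := by exact_mod_cast hn
        nlinarith [hα0]
    linarith
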